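/- Let R be a φ-ring. Then R is a φ-IF ring if and only if every φ-torsion R-module is φ-copure flat, i.e., if and only if Tor_1^R(E,T) = 0 for every φ-torsion R-module T and every nonnil-injective R-module E. -/

import Mathlib

open CategoryTheory

universe u

/-- A commutative ring is a `φ`-ring if its nilradical is a divided prime ideal. -/
def IsPhiRing (R : Type u) [CommRing R] : Prop :=
  (nilradical R).IsPrime ∧ ∀ x : R, x ∉ nilradical R → nilradical R ≤ Ideal.span {x}

/-- A ring is nonnil-coherent if every finitely generated nonnil ideal is
finitely presented as a module. -/
def IsNonnilCoherent (R : Type u) [CommRing R] : Prop :=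
  ∀ I : Ideal R, I.FG → ¬ I ≤ nilradical R → Module.FinitePresentation R I

/-- A module is φ-torsion if every element is annihilated by a nonnil ideal. -/
def IsPhiTorsion (R : Type u) [CommRing R] (T : Type u) [AddCommGroup T] [Module R T] : Prop :=
  ∀ t : T, ∃ I : Ideal R, ¬ I ≤ nilradical R ∧ ∀ a ∈ I, a • t = 0

/-- A module `M` is φ-flat if `Tor₁ᴿ(T, M) = 0` for every φ-torsion module `T`. -/
def IsPhiFlat (R : Type u) [CommRing R] (M : Type u) [AddCommGroup M] [Module R M] : Prop :=
  ∀ (T : Type u) [AddCommGroup T] [Module R T], IsPhiTorsion R T →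
    Subsingleton (((Tor (ModuleCat.{u} R) 1).obj (ModuleCat.of R T)).obj (ModuleCat.of R M))

/-- A module `M` is nonnil-injective if `Ext¹ᴿ(T, M) = 0` for every φ-torsion module `T`. -/
def IsNonnilInjective (R : Type u) [CommRing R] (M : Type u) [AddCommGroup M] [Module R M] :
    Prop :=
  ∀ (T : Type u) [AddCommGroup T] [Module R T], IsPhiTorsion R T →
    Subsingleton (((Ext R (ModuleCat.{u} R) 1).obj (Opposite.op (ModuleCat.of R T))).obj
      (ModuleCat.of R M))

/-- A module `M` is nonnil-FP-injective if `Ext¹ᴿ(T, M) = 0` for every finitely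
presented φ-torsion module `T`. -/
def IsNonnilFPInjective (R : Type u) [CommRing R] (M : Type u) [AddCommGroup M] [Module R M] :
    Prop :=
  ∀ (T : Type u) [AddCommGroup T] [Module R T], Module.FinitePresentation R T →
    IsPhiTorsion R T →
    Subsingleton (((Ext R (ModuleCat.{u} R) 1).obj (Opposite.op (ModuleCat.of R T))).obj
      (ModuleCat.of R M))


section TorSymmAux

open LinearMap TensorProduct Function Limits

section Aux
variable {R : Type u} [CommRing R]

/-- Flip injectivity of `rTensor` to `lTensor` using the commutativity of tensor products. -/
lemma injective_rTensor_iff_lTensor {Y A B : Type u}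
    [AddCommGroup Y] [Module R Y] [AddCommGroup A] [Module R A] [AddCommGroup B] [Module R B]
    (f : A →ₗ[R] B) :
    Function.Injective (rTensor Y f) ↔ Function.Injective (lTensor Y f) := by
  have key : (TensorProduct.comm R B Y).toLinearMap ∘ₗ rTensor Y f
      = (lTensor Y f) ∘ₗ (TensorProduct.comm R A Y).toLinearMap := by
    apply TensorProduct.ext'
    intro a y
    rfl
  have key' : ∀ z : A ⊗[R] Y, TensorProduct.comm R B Y (rTensor Y f z)
      = lTensor Y f (TensorProduct.comm R A Y z) := by
    intro z
    have := DFunLike.congr_fun key z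
    simpa only [LinearMap.coe_comp, Function.comp_apply, LinearEquiv.coe_coe] using this
  have h1 : ⇑(lTensor Y f) = ⇑(TensorProduct.comm R B Y) ∘ ⇑(rTensor Y f) ∘
      ⇑(TensorProduct.comm R A Y).symm := by
    funext z
    have := key' ((TensorProduct.comm R A Y).symm z)
    simpa using this.symm
  have h2 : ⇑(rTensor Y f) = ⇑(TensorProduct.comm R B Y).symm ∘ ⇑(lTensor Y f) ∘
      ⇑(TensorProduct.comm R A Y) := by
    funext z
    simp [← key' z]
  constructor
  · intro h
    rw [h1]
    exact (TensorProduct.comm R B Y).injective.comp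
      (h.comp (TensorProduct.comm R A Y).symm.injective)
  · intro h
    rw [h2]
    exact (TensorProduct.comm R B Y).symm.injective.comp
      (h.comp (TensorProduct.comm R A Y).injective)

/-- One direction of the "bridge" for the symmetry of `Tor₁`. -/
lemma bridge_aux {K F Y L G X : Type u}
    [AddCommGroup K] [Module R K] [AddCommGroup F] [Module R F]
    [AddCommGroup Y] [Module R Y] [AddCommGroup L] [Module R L]
    [AddCommGroup G] [Module R G] [AddCommGroup X] [Module R X]
    (ι : K →ₗ[R] F) (π : F →ₗ[R] Y) (ι' : L →ₗ[R] G) (ρ : G →ₗ[R] X)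
    (hι : Function.Injective ι) (hπ : Function.Surjective π)
    (hexK : Function.Exact ι π)
    (hρ : Function.Surjective ρ) (hexL : Function.Exact ι' ρ)
    (hG : Module.Flat R G)
    (h : Function.Injective (rTensor Y ι')) :
    Function.Injective (lTensor X ι) := by
  rw [injective_iff_map_eq_zero]
  intro t ht
  -- lift t along the surjection G ⊗ K → X ⊗ K
  obtain ⟨s, rfl⟩ := LinearMap.rTensor_surjective K hρ t
  -- naturality: (rTensor F ρ) (lTensor G ι s) = (lTensor X ι) ((rTensor K ρ) s) = 0
  have hnat1 : ∀ z : G ⊗[R] K, rTensor F ρ (lTensor G ι z) = lTensor X ι (rTensor K ρ z) := by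
    intro z
    induction z using TensorProduct.induction_on with
    | zero => simp
    | tmul g k => simp
    | add x y hx hy => simp [map_add, hx, hy]
  have h2 : rTensor F ρ (lTensor G ι s) = 0 := by rw [hnat1 s, ht]
  -- exactness of L ⊗ F → G ⊗ F → X ⊗ F
  have hexF : Function.Exact (rTensor F ι') (rTensor F ρ) :=
    rTensor_exact F hexL hρ
  obtain ⟨u, hu⟩ := (hexF _).mp h2
  -- (lTensor G π) (lTensor G ι s) = 0 since π ∘ ι = 0
  have hπι : π ∘ₗ ι = 0 := by
    ext x
    exact hexK.apply_apply_eq_zero x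
  have h4' : ∀ z : G ⊗[R] K, lTensor G π (lTensor G ι z) = 0 := by
    intro z
    induction z using TensorProduct.induction_on with
    | zero => simp
    | tmul g k => simp [hexK.apply_apply_eq_zero]
    | add x y hx hy => simp [map_add, hx, hy]
  have h4 : lTensor G π (lTensor G ι s) = 0 := h4' s
  -- naturality: (lTensor G π) (rTensor F ι' u) = (rTensor Y ι') (lTensor L π u)
  have hnat2' : ∀ z : L ⊗[R] F, lTensor G π (rTensor F ι' z) = rTensor Y ι' (lTensor L π z) := by
    intro z
    induction z using TensorProduct.induction_on with
    | zero => simp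
    | tmul l x => simp
    | add x y hx hy => simp [map_add, hx, hy]
  have h5 : rTensor Y ι' (lTensor L π u) = 0 := by
    rw [← hnat2' u, hu, h4]
  have h6 : lTensor L π u = 0 := by
    rw [injective_iff_map_eq_zero] at h
    exact h _ h5
  -- exactness of L ⊗ K → L ⊗ F → L ⊗ Y
  have hexL2 : Function.Exact (lTensor L ι) (lTensor L π) :=
    lTensor_exact L hexK hπ
  obtain ⟨w, hw⟩ := (hexL2 _).mp h6
  -- s = (rTensor K ι') w, by injectivity of lTensor G ι (G flat)
  have hnat3' : ∀ z : L ⊗[R] K, lTensor G ι (rTensor K ι' z) = rTensor F ι' (lTensor L ι z) := by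
    intro z
    induction z using TensorProduct.induction_on with
    | zero => simp
    | tmul l k => simp
    | add x y hx hy => simp [map_add, hx, hy]
  have hGinj : Function.Injective (lTensor G ι) :=
    Module.Flat.lTensor_preserves_injective_linearMap (M := G) ι hι
  have hs : s = rTensor K ι' w := by
    apply hGinj
    rw [hnat3' w, hw, hu]
  -- conclude: t = (rTensor K ρ) ((rTensor K ι') w) = (rTensor K (ρ ∘ ι')) w = 0
  have hρι' : ρ ∘ₗ ι' = 0 := by
    ext x
    exact hexL.apply_apply_eq_zero x
  have hfin : ∀ z : L ⊗[R] K, rTensor K ρ (rTensor K ι' z) = 0 := by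
    intro z
    induction z using TensorProduct.induction_on with
    | zero => simp
    | tmul l k => simp [hexL.apply_apply_eq_zero]
    | add x y hx hy => simp [map_add, hx, hy]
  rw [hs]
  exact hfin w

/-- `Tor₁` via a two-step piece of a resolution: exactness of the tensored complex
is equivalent to injectivity of tensoring the inclusion of the syzygy. -/
lemma exact_lTensor_iff {P₂ P₁ P₀ X : Type u}
    [AddCommGroup P₂] [Module R P₂] [AddCommGroup P₁] [Module R P₁]
    [AddCommGroup P₀] [Module R P₀] [AddCommGroup X] [Module R X]
    (d₂ : P₂ →ₗ[R] P₁) (d₁ : P₁ →ₗ[R] P₀) (h : Function.Exact d₂ d₁) :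
    Function.Exact (lTensor X d₂) (lTensor X d₁) ↔
      Function.Injective (lTensor X (LinearMap.range d₁).subtype) := by
  set q : P₁ →ₗ[R] LinearMap.range d₁ := d₁.rangeRestrict with hqdef
  have hq : Function.Surjective q := d₁.surjective_rangeRestrict
  have hexq : Function.Exact d₂ q := by
    rw [LinearMap.exact_iff] at h ⊢
    rw [hqdef, LinearMap.ker_rangeRestrict, h]
  have hcomp : lTensor X d₁ = (lTensor X (LinearMap.range d₁).subtype) ∘ₗ (lTensor X q) := by
    rw [← lTensor_comp]
    congr 1
  have hq' : Function.Surjective (lTensor X q) := LinearMap.lTensor_surjective X hq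
  have hexq' : Function.Exact (lTensor X d₂) (lTensor X q) := lTensor_exact X hexq hq
  constructor
  · intro hE
    rw [injective_iff_map_eq_zero]
    intro z hz
    obtain ⟨x, rfl⟩ := hq' z
    have hx : lTensor X d₁ x = 0 := by
      rw [hcomp]
      simpa using hz
    obtain ⟨y, hy⟩ := (hE x).mp hx
    rw [← hy]
    exact hexq'.apply_apply_eq_zero y
  · intro hI
    intro x
    constructor
    · intro hx
      have hx' : lTensor X (LinearMap.range d₁).subtype (lTensor X q x) = 0 := by
        have := DFunLike.congr_fun hcomp x
        simp only [LinearMap.coe_comp, Function.comp_apply] at this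
        rw [← this, hx]
      have h0 : lTensor X q x = 0 := by
        rw [injective_iff_map_eq_zero] at hI
        exact hI _ hx'
      exact (hexq' x).mp h0
    · rintro ⟨y, rfl⟩
      have h0 : lTensor X q (lTensor X d₂ y) = 0 := hexq'.apply_apply_eq_zero y
      have := DFunLike.congr_fun hcomp (lTensor X d₂ y)
      simp only [LinearMap.coe_comp, Function.comp_apply] at this
      rw [this, h0]
      simp

end Aux

section Cat
variable {R : Type u} [CommRing R]

open Limits

lemma ModuleCat.subsingleton_iff_isZero' (M : ModuleCat.{u} R) :
    Subsingleton M ↔ Limits.IsZero M := by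
  constructor
  · intro h
    exact ModuleCat.isZero_of_subsingleton M
  · intro h
    have h0 : (𝟙 M : M ⟶ M) = 0 := h.eq_of_src _ _
    refine ⟨fun a b => ?_⟩
    have ha := LinearMap.congr_fun (congrArg ModuleCat.Hom.hom h0) a
    have hb := LinearMap.congr_fun (congrArg ModuleCat.Hom.hom h0) b
    simp only [ModuleCat.hom_id, ModuleCat.hom_zero, LinearMap.id_apply, LinearMap.zero_apply] at ha hb
    rw [ha, hb]

lemma flat_of_cat_projective (M : ModuleCat.{u} R) [h : Projective M] : Module.Flat R M := by
  have : Module.Projective R M := by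
    exact (IsProjective.iff_projective.{u, u} M).mpr (by simpa using h)
  infer_instance

lemma subsingleton_tor_iff (X Y : Type u) [AddCommGroup X] [Module R X]
    [AddCommGroup Y] [Module R Y] (P : ProjectiveResolution (ModuleCat.of R Y)) :
    Subsingleton (((Tor (ModuleCat.{u} R) 1).obj (ModuleCat.of R X)).obj (ModuleCat.of R Y)) ↔
      Function.Exact
        (lTensor X (show P.complex.X 2 →ₗ[R] P.complex.X 1 from (P.complex.d 2 1).hom))
        (lTensor X (show P.complex.X 1 →ₗ[R] P.complex.X 0 from (P.complex.d 1 0).hom)) := by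
  let F := (MonoidalCategory.tensoringLeft (ModuleCat.{u} R)).obj (ModuleCat.of R X)
  let e := P.isoLeftDerivedObj F 1
  let K := (F.mapHomologicalComplex (ComplexShape.down ℕ)).obj P.complex
  refine (ModuleCat.subsingleton_iff_isZero' _).trans ?_
  refine Iff.trans ⟨fun h => h.of_iso e.symm, fun h => h.of_iso e⟩ ?_
  refine Iff.trans (HomologicalComplex.exactAt_iff_isZero_homology K 1).symm ?_
  refine Iff.trans (HomologicalComplex.exactAt_iff' K 2 1 0
    (by simp only [ChainComplex.prev]; rfl) (by simp)) ?_
  exact ShortComplex.ShortExact.moduleCat_exact_iff_function_exact _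

end Cat

section Comm
variable {R : Type u} [CommRing R]

open LinearMap Function

lemma tor_subsingleton_comm (X Y : Type u) [AddCommGroup X] [Module R X]
    [AddCommGroup Y] [Module R Y] :
    Subsingleton (((Tor (ModuleCat.{u} R) 1).obj (ModuleCat.of R X)).obj (ModuleCat.of R Y)) ↔
      Subsingleton (((Tor (ModuleCat.{u} R) 1).obj (ModuleCat.of R Y)).obj (ModuleCat.of R X)) := by
  obtain ⟨P⟩ := (inferInstance : HasProjectiveResolution (ModuleCat.of R Y)).out
  obtain ⟨Q⟩ := (inferInstance : HasProjectiveResolution (ModuleCat.of R X)).out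
  have hdP : Function.Exact
      (show P.complex.X 2 →ₗ[R] P.complex.X 1 from (P.complex.d 2 1).hom)
      (show P.complex.X 1 →ₗ[R] P.complex.X 0 from (P.complex.d 1 0).hom) :=
    (ShortComplex.ShortExact.moduleCat_exact_iff_function_exact _).mp (P.exact_succ 0)
  have hdQ : Function.Exact
      (show Q.complex.X 2 →ₗ[R] Q.complex.X 1 from (Q.complex.d 2 1).hom)
      (show Q.complex.X 1 →ₗ[R] Q.complex.X 0 from (Q.complex.d 1 0).hom) :=
    (ShortComplex.ShortExact.moduleCat_exact_iff_function_exact _).mp (Q.exact_succ 0)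
  have hπP : Function.Surjective (show P.complex.X 0 →ₗ[R] Y from (P.π.f 0).hom) :=
    (ModuleCat.epi_iff_surjective _).mp inferInstance
  have hπQ : Function.Surjective (show Q.complex.X 0 →ₗ[R] X from (Q.π.f 0).hom) :=
    (ModuleCat.epi_iff_surjective _).mp inferInstance
  have hcoP : (ShortComplex.mk (P.complex.d 1 0) (P.π.f 0) P.complex_d_comp_π_f_zero).Exact := by
    apply ShortComplex.exact_of_g_is_cokernel
    exact P.isColimitCokernelCofork
  have hcoQ : (ShortComplex.mk (Q.complex.d 1 0) (Q.π.f 0) Q.complex_d_comp_π_f_zero).Exact := by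
    apply ShortComplex.exact_of_g_is_cokernel
    exact Q.isColimitCokernelCofork
  have hexP0 : Function.Exact (show P.complex.X 1 →ₗ[R] P.complex.X 0 from (P.complex.d 1 0).hom)
      (show P.complex.X 0 →ₗ[R] Y from (P.π.f 0).hom) :=
    (ShortComplex.ShortExact.moduleCat_exact_iff_function_exact _).mp hcoP
  have hexQ0 : Function.Exact (show Q.complex.X 1 →ₗ[R] Q.complex.X 0 from (Q.complex.d 1 0).hom)
      (show Q.complex.X 0 →ₗ[R] X from (Q.π.f 0).hom) :=
    (ShortComplex.ShortExact.moduleCat_exact_iff_function_exact _).mp hcoQ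
  have hexPι : Function.Exact
      (⇑(LinearMap.range (show P.complex.X 1 →ₗ[R] P.complex.X 0 from (P.complex.d 1 0).hom)).subtype)
      (show P.complex.X 0 →ₗ[R] Y from (P.π.f 0).hom) := by
    exact fun y => (hexP0 y).trans (by simp)
  have hexQι : Function.Exact
      (⇑(LinearMap.range (show Q.complex.X 1 →ₗ[R] Q.complex.X 0 from (Q.complex.d 1 0).hom)).subtype)
      (show Q.complex.X 0 →ₗ[R] X from (Q.π.f 0).hom) := by
    exact fun y => (hexQ0 y).trans (by simp)
  rw [subsingleton_tor_iff X Y P, subsingleton_tor_iff Y X Q,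
      exact_lTensor_iff _ _ hdP, exact_lTensor_iff _ _ hdQ]
  constructor
  · intro hinj
    exact bridge_aux _ (show Q.complex.X 0 →ₗ[R] X from (Q.π.f 0).hom) _
      (show P.complex.X 0 →ₗ[R] Y from (P.π.f 0).hom)
      (Submodule.injective_subtype _) hπQ hexQι hπP hexPι (flat_of_cat_projective _)
      ((injective_rTensor_iff_lTensor _).mpr hinj)
  · intro hinj
    exact bridge_aux _ (show P.complex.X 0 →ₗ[R] Y from (P.π.f 0).hom) _
      (show Q.complex.X 0 →ₗ[R] X from (Q.π.f 0).hom)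
      (Submodule.injective_subtype _) hπP hexPι hπQ hexQι (flat_of_cat_projective _)
      ((injective_rTensor_iff_lTensor _).mpr hinj)

end Comm

end TorSymmAux

/-- A φ-ring `R` is a φ-IF ring if and only if every φ-torsion module
is φ-copure flat, i.e. `Tor₁ᴿ(E,T) = 0` for every φ-torsion `T` and nonnil-injective
`E`. -/
theorem phiIF_iff_phiTorsion_phiCopureFlat (R : Type u) [CommRing R]
    (hR : IsPhiRing R) :
    (∀ (M : Type u) [AddCommGroup M] [Module R M],
        IsNonnilInjective R M → IsPhiFlat R M) ↔
      ∀ (T : Type u) [AddCommGroup T] [Module R T], IsPhiTorsion R T →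
        ∀ (E : Type u) [AddCommGroup E] [Module R E], IsNonnilInjective R E →
          Subsingleton (((Tor (ModuleCat.{u} R) 1).obj (ModuleCat.of R E)).obj
            (ModuleCat.of R T)) := by
  constructor
  · intro h T _ _ hT E _ _ hE
    exact (tor_subsingleton_comm E T).mpr (h E hE T hT)
  · intro h M _ _ hM T _ _ hT
    exact (tor_subsingleton_comm T M).mpr (h T hT M hM)
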